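/- The 21 quadratic forms in 21 variables x_0,...,x_20 listed in equation (3) and the 21 quadratic forms listed in equation (4) define mutually inverse birational self-maps of P^20; i.e., substituting the forms of (3) into those of (4) yields (x_0·T, ..., x_20·T) for a single nonzero cubic form T. -/
import Mathlib


open MvPolynomial

noncomputable section

/-- Coordinates `x₀, …, x₂₀` on `ℙ²⁰`. -/
abbrev y : Fin 21 → MvPolynomial (Fin 21) ℚ := X

/-- The 21 quadrics of equation (3), defining the Cremona map `ω : ℙ²⁰ ⇢ ℙ²⁰`. -/
def omegaP20 : Fin 21 → MvPolynomial (Fin 21) ℚ :=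
  ![y 10 * y 15 - y 9 * y 16 + y 6 * y 20,
    y 10 * y 14 - y 8 * y 16 + y 5 * y 20,
    y 9 * y 14 - y 8 * y 15 + y 4 * y 20,
    y 6 * y 14 - y 5 * y 15 + y 4 * y 16,
    y 11 * y 13 - y 16 * y 17 + y 15 * y 18 - y 14 * y 19 + y 12 * y 20,
    y 3 * y 13 - y 10 * y 17 + y 9 * y 18 - y 8 * y 19 + y 7 * y 20,
    y 10 * y 12 - y 2 * y 13 - y 7 * y 16 - y 6 * y 18 + y 5 * y 19,
    y 9 * y 12 - y 1 * y 13 - y 7 * y 15 - y 6 * y 17 + y 4 * y 19,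
    y 8 * y 12 - y 0 * y 13 - y 7 * y 14 - y 5 * y 17 + y 4 * y 18,
    y 10 * y 11 - y 3 * y 16 + y 2 * y 20,
    y 9 * y 11 - y 3 * y 15 + y 1 * y 20,
    y 8 * y 11 - y 3 * y 14 + y 0 * y 20,
    y 7 * y 11 - y 3 * y 12 + y 2 * y 17 - y 1 * y 18 + y 0 * y 19,
    y 6 * y 11 - y 2 * y 15 + y 1 * y 16,
    y 5 * y 11 - y 2 * y 14 + y 0 * y 16,
    y 4 * y 11 - y 1 * y 14 + y 0 * y 15,
    y 6 * y 8 - y 5 * y 9 + y 4 * y 10,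
    y 3 * y 6 - y 2 * y 9 + y 1 * y 10,
    y 3 * y 5 - y 2 * y 8 + y 0 * y 10,
    y 3 * y 4 - y 1 * y 8 + y 0 * y 9,
    y 2 * y 4 - y 1 * y 5 + y 0 * y 6]

/-- The 21 quadrics of equation (4), the claimed inverse `ω⁻¹`. -/
def omegaInvP20 : Fin 21 → MvPolynomial (Fin 21) ℚ :=
  ![-(y 15 * y 18) + y 14 * y 19 - y 11 * y 20,
    -(y 15 * y 17) + y 13 * y 19 - y 10 * y 20,
    -(y 14 * y 17) + y 13 * y 18 - y 9 * y 20,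
    -(y 11 * y 17) + y 10 * y 18 - y 9 * y 19,
    -(y 15 * y 16) + y 3 * y 19 - y 2 * y 20,
    -(y 14 * y 16) + y 3 * y 18 - y 1 * y 20,
    -(y 13 * y 16) + y 3 * y 17 - y 0 * y 20,
    -(y 12 * y 16) - y 8 * y 17 + y 7 * y 18 - y 6 * y 19 - y 5 * y 20,
    -(y 11 * y 16) + y 2 * y 18 - y 1 * y 19,
    -(y 10 * y 16) + y 2 * y 17 - y 0 * y 19,
    -(y 9 * y 16) + y 1 * y 17 - y 0 * y 18,
    -(y 11 * y 13) + y 10 * y 14 - y 9 * y 15,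
    -(y 3 * y 12) - y 8 * y 13 + y 7 * y 14 - y 6 * y 15 - y 4 * y 20,
    y 3 * y 5 + y 2 * y 6 - y 1 * y 7 + y 0 * y 8 - y 4 * y 16,
    -(y 3 * y 11) + y 2 * y 14 - y 1 * y 15,
    -(y 3 * y 10) + y 2 * y 13 - y 0 * y 15,
    -(y 3 * y 9) + y 1 * y 13 - y 0 * y 14,
    -(y 8 * y 10) + y 7 * y 11 - y 2 * y 12 + y 5 * y 15 - y 4 * y 19,
    -(y 8 * y 9) + y 6 * y 11 - y 1 * y 12 + y 5 * y 14 - y 4 * y 18,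
    -(y 7 * y 9) + y 6 * y 10 - y 0 * y 12 + y 5 * y 13 - y 4 * y 17,
    -(y 2 * y 9) + y 1 * y 10 - y 0 * y 11]

/-- The 21 quadrics of equation (3) and the 21 quadrics of equation (4) define mutually
inverse birational self-maps of `ℙ²⁰`: substituting the forms of (3) into those of (4)
yields `(x₀·T, …, x₂₀·T)` for a single nonzero cubic form `T`. -/

def Tcub : MvPolynomial (Fin 21) ℚ :=
  -(y 6*y 8*y 11)+y 5*y 9*y 11-y 4*y 10*y 11+y 3*y 6*y 14-y 3*y 5*y 15+y 3*y 4*y 16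
  -y 2*y 9*y 14+y 2*y 8*y 15-y 2*y 4*y 20+y 1*y 10*y 14-y 1*y 8*y 16+y 1*y 5*y 20
  -y 0*y 10*y 15+y 0*y 9*y 16-y 0*y 6*y 20

lemma hX3 (i j k : Fin 21) : (y i * y j * y k).IsHomogeneous 3 := by
  have h := ((isHomogeneous_X ℚ i).mul (isHomogeneous_X ℚ j)).mul (isHomogeneous_X ℚ k)
  simpa using h

lemma Tcub_ne : Tcub ≠ 0 := by
  intro h
  have h2 := congrArg
    (eval (fun i : Fin 21 => if i = 0 ∨ i = 10 ∨ i = 15 then (1:ℚ) else 0)) h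
  simp (config := { decide := true }) only [Tcub, y, map_add, map_sub, map_neg, map_mul,
    eval_X, map_zero] at h2
  norm_num at h2

lemma Tcub_hom : Tcub.IsHomogeneous 3 := by
  unfold Tcub
  repeat' first
    | apply MvPolynomial.IsHomogeneous.sub
    | apply MvPolynomial.IsHomogeneous.add
    | apply MvPolynomial.IsHomogeneous.neg
    | exact hX3 _ _ _


lemma om_0 : omegaP20 0 = y 10 * y 15 - y 9 * y 16 + y 6 * y 20 := rfl

lemma om_1 : omegaP20 1 = y 10 * y 14 - y 8 * y 16 + y 5 * y 20 := rfl

lemma om_2 : omegaP20 2 = y 9 * y 14 - y 8 * y 15 + y 4 * y 20 := rfl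

lemma om_3 : omegaP20 3 = y 6 * y 14 - y 5 * y 15 + y 4 * y 16 := rfl

lemma om_4 : omegaP20 4 = y 11 * y 13 - y 16 * y 17 + y 15 * y 18 - y 14 * y 19 + y 12 * y 20 := rfl

lemma om_5 : omegaP20 5 = y 3 * y 13 - y 10 * y 17 + y 9 * y 18 - y 8 * y 19 + y 7 * y 20 := rfl

lemma om_6 : omegaP20 6 = y 10 * y 12 - y 2 * y 13 - y 7 * y 16 - y 6 * y 18 + y 5 * y 19 := rfl

lemma om_7 : omegaP20 7 = y 9 * y 12 - y 1 * y 13 - y 7 * y 15 - y 6 * y 17 + y 4 * y 19 := rfl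

lemma om_8 : omegaP20 8 = y 8 * y 12 - y 0 * y 13 - y 7 * y 14 - y 5 * y 17 + y 4 * y 18 := rfl

lemma om_9 : omegaP20 9 = y 10 * y 11 - y 3 * y 16 + y 2 * y 20 := rfl

lemma om_10 : omegaP20 10 = y 9 * y 11 - y 3 * y 15 + y 1 * y 20 := rfl

lemma om_11 : omegaP20 11 = y 8 * y 11 - y 3 * y 14 + y 0 * y 20 := rfl

lemma om_12 : omegaP20 12 = y 7 * y 11 - y 3 * y 12 + y 2 * y 17 - y 1 * y 18 + y 0 * y 19 := rfl

lemma om_13 : omegaP20 13 = y 6 * y 11 - y 2 * y 15 + y 1 * y 16 := rfl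

lemma om_14 : omegaP20 14 = y 5 * y 11 - y 2 * y 14 + y 0 * y 16 := rfl

lemma om_15 : omegaP20 15 = y 4 * y 11 - y 1 * y 14 + y 0 * y 15 := rfl

lemma om_16 : omegaP20 16 = y 6 * y 8 - y 5 * y 9 + y 4 * y 10 := rfl

lemma om_17 : omegaP20 17 = y 3 * y 6 - y 2 * y 9 + y 1 * y 10 := rfl

lemma om_18 : omegaP20 18 = y 3 * y 5 - y 2 * y 8 + y 0 * y 10 := rfl

lemma om_19 : omegaP20 19 = y 3 * y 4 - y 1 * y 8 + y 0 * y 9 := rfl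

lemma om_20 : omegaP20 20 = y 2 * y 4 - y 1 * y 5 + y 0 * y 6 := rfl

lemma oi_0 : omegaInvP20 0 = -(y 15 * y 18) + y 14 * y 19 - y 11 * y 20 := rfl

lemma oi_1 : omegaInvP20 1 = -(y 15 * y 17) + y 13 * y 19 - y 10 * y 20 := rfl

lemma oi_2 : omegaInvP20 2 = -(y 14 * y 17) + y 13 * y 18 - y 9 * y 20 := rfl

lemma oi_3 : omegaInvP20 3 = -(y 11 * y 17) + y 10 * y 18 - y 9 * y 19 := rfl

lemma oi_4 : omegaInvP20 4 = -(y 15 * y 16) + y 3 * y 19 - y 2 * y 20 := rfl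

lemma oi_5 : omegaInvP20 5 = -(y 14 * y 16) + y 3 * y 18 - y 1 * y 20 := rfl

lemma oi_6 : omegaInvP20 6 = -(y 13 * y 16) + y 3 * y 17 - y 0 * y 20 := rfl

lemma oi_7 : omegaInvP20 7 = -(y 12 * y 16) - y 8 * y 17 + y 7 * y 18 - y 6 * y 19 - y 5 * y 20 := rfl

lemma oi_8 : omegaInvP20 8 = -(y 11 * y 16) + y 2 * y 18 - y 1 * y 19 := rfl

lemma oi_9 : omegaInvP20 9 = -(y 10 * y 16) + y 2 * y 17 - y 0 * y 19 := rfl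

lemma oi_10 : omegaInvP20 10 = -(y 9 * y 16) + y 1 * y 17 - y 0 * y 18 := rfl

lemma oi_11 : omegaInvP20 11 = -(y 11 * y 13) + y 10 * y 14 - y 9 * y 15 := rfl

lemma oi_12 : omegaInvP20 12 = -(y 3 * y 12) - y 8 * y 13 + y 7 * y 14 - y 6 * y 15 - y 4 * y 20 := rfl

lemma oi_13 : omegaInvP20 13 = y 3 * y 5 + y 2 * y 6 - y 1 * y 7 + y 0 * y 8 - y 4 * y 16 := rfl

lemma oi_14 : omegaInvP20 14 = -(y 3 * y 11) + y 2 * y 14 - y 1 * y 15 := rfl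

lemma oi_15 : omegaInvP20 15 = -(y 3 * y 10) + y 2 * y 13 - y 0 * y 15 := rfl

lemma oi_16 : omegaInvP20 16 = -(y 3 * y 9) + y 1 * y 13 - y 0 * y 14 := rfl

lemma oi_17 : omegaInvP20 17 = -(y 8 * y 10) + y 7 * y 11 - y 2 * y 12 + y 5 * y 15 - y 4 * y 19 := rfl

lemma oi_18 : omegaInvP20 18 = -(y 8 * y 9) + y 6 * y 11 - y 1 * y 12 + y 5 * y 14 - y 4 * y 18 := rfl

lemma oi_19 : omegaInvP20 19 = -(y 7 * y 9) + y 6 * y 10 - y 0 * y 12 + y 5 * y 13 - y 4 * y 17 := rfl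

lemma oi_20 : omegaInvP20 20 = -(y 2 * y 9) + y 1 * y 10 - y 0 * y 11 := rfl

lemma main_0 : aeval omegaP20 (omegaInvP20 0) = X 0 * Tcub := by
  rw [oi_0]
  simp only [y, map_add, map_sub, map_neg, map_mul, aeval_X, om_0, om_1, om_2, om_3, om_4, om_5, om_6, om_7, om_8, om_9, om_10, om_11, om_12, om_13, om_14, om_15, om_16, om_17, om_18, om_19, om_20]
  unfold Tcub y
  ring

lemma main_1 : aeval omegaP20 (omegaInvP20 1) = X 1 * Tcub := by
  rw [oi_1]
  simp only [y, map_add, map_sub, map_neg, map_mul, aeval_X, om_0, om_1, om_2, om_3, om_4, om_5, om_6, om_7, om_8, om_9, om_10, om_11, om_12, om_13, om_14, om_15, om_16, om_17, om_18, om_19, om_20]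
  unfold Tcub y
  ring

lemma main_2 : aeval omegaP20 (omegaInvP20 2) = X 2 * Tcub := by
  rw [oi_2]
  simp only [y, map_add, map_sub, map_neg, map_mul, aeval_X, om_0, om_1, om_2, om_3, om_4, om_5, om_6, om_7, om_8, om_9, om_10, om_11, om_12, om_13, om_14, om_15, om_16, om_17, om_18, om_19, om_20]
  unfold Tcub y
  ring

lemma main_3 : aeval omegaP20 (omegaInvP20 3) = X 3 * Tcub := by
  rw [oi_3]
  simp only [y, map_add, map_sub, map_neg, map_mul, aeval_X, om_0, om_1, om_2, om_3, om_4, om_5, om_6, om_7, om_8, om_9, om_10, om_11, om_12, om_13, om_14, om_15, om_16, om_17, om_18, om_19, om_20]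
  unfold Tcub y
  ring

lemma main_4 : aeval omegaP20 (omegaInvP20 4) = X 4 * Tcub := by
  rw [oi_4]
  simp only [y, map_add, map_sub, map_neg, map_mul, aeval_X, om_0, om_1, om_2, om_3, om_4, om_5, om_6, om_7, om_8, om_9, om_10, om_11, om_12, om_13, om_14, om_15, om_16, om_17, om_18, om_19, om_20]
  unfold Tcub y
  ring

lemma main_5 : aeval omegaP20 (omegaInvP20 5) = X 5 * Tcub := by
  rw [oi_5]
  simp only [y, map_add, map_sub, map_neg, map_mul, aeval_X, om_0, om_1, om_2, om_3, om_4, om_5, om_6, om_7, om_8, om_9, om_10, om_11, om_12, om_13, om_14, om_15, om_16, om_17, om_18, om_19, om_20]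
  unfold Tcub y
  ring

lemma main_6 : aeval omegaP20 (omegaInvP20 6) = X 6 * Tcub := by
  rw [oi_6]
  simp only [y, map_add, map_sub, map_neg, map_mul, aeval_X, om_0, om_1, om_2, om_3, om_4, om_5, om_6, om_7, om_8, om_9, om_10, om_11, om_12, om_13, om_14, om_15, om_16, om_17, om_18, om_19, om_20]
  unfold Tcub y
  ring

lemma main_7 : aeval omegaP20 (omegaInvP20 7) = X 7 * Tcub := by
  rw [oi_7]
  simp only [y, map_add, map_sub, map_neg, map_mul, aeval_X, om_0, om_1, om_2, om_3, om_4, om_5, om_6, om_7, om_8, om_9, om_10, om_11, om_12, om_13, om_14, om_15, om_16, om_17, om_18, om_19, om_20]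
  unfold Tcub y
  ring

lemma main_8 : aeval omegaP20 (omegaInvP20 8) = X 8 * Tcub := by
  rw [oi_8]
  simp only [y, map_add, map_sub, map_neg, map_mul, aeval_X, om_0, om_1, om_2, om_3, om_4, om_5, om_6, om_7, om_8, om_9, om_10, om_11, om_12, om_13, om_14, om_15, om_16, om_17, om_18, om_19, om_20]
  unfold Tcub y
  ring

lemma main_9 : aeval omegaP20 (omegaInvP20 9) = X 9 * Tcub := by
  rw [oi_9]
  simp only [y, map_add, map_sub, map_neg, map_mul, aeval_X, om_0, om_1, om_2, om_3, om_4, om_5, om_6, om_7, om_8, om_9, om_10, om_11, om_12, om_13, om_14, om_15, om_16, om_17, om_18, om_19, om_20]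
  unfold Tcub y
  ring

lemma main_10 : aeval omegaP20 (omegaInvP20 10) = X 10 * Tcub := by
  rw [oi_10]
  simp only [y, map_add, map_sub, map_neg, map_mul, aeval_X, om_0, om_1, om_2, om_3, om_4, om_5, om_6, om_7, om_8, om_9, om_10, om_11, om_12, om_13, om_14, om_15, om_16, om_17, om_18, om_19, om_20]
  unfold Tcub y
  ring

lemma main_11 : aeval omegaP20 (omegaInvP20 11) = X 11 * Tcub := by
  rw [oi_11]
  simp only [y, map_add, map_sub, map_neg, map_mul, aeval_X, om_0, om_1, om_2, om_3, om_4, om_5, om_6, om_7, om_8, om_9, om_10, om_11, om_12, om_13, om_14, om_15, om_16, om_17, om_18, om_19, om_20]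
  unfold Tcub y
  ring

lemma main_12 : aeval omegaP20 (omegaInvP20 12) = X 12 * Tcub := by
  rw [oi_12]
  simp only [y, map_add, map_sub, map_neg, map_mul, aeval_X, om_0, om_1, om_2, om_3, om_4, om_5, om_6, om_7, om_8, om_9, om_10, om_11, om_12, om_13, om_14, om_15, om_16, om_17, om_18, om_19, om_20]
  unfold Tcub y
  ring

lemma main_13 : aeval omegaP20 (omegaInvP20 13) = X 13 * Tcub := by
  rw [oi_13]
  simp only [y, map_add, map_sub, map_neg, map_mul, aeval_X, om_0, om_1, om_2, om_3, om_4, om_5, om_6, om_7, om_8, om_9, om_10, om_11, om_12, om_13, om_14, om_15, om_16, om_17, om_18, om_19, om_20]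
  unfold Tcub y
  ring

lemma main_14 : aeval omegaP20 (omegaInvP20 14) = X 14 * Tcub := by
  rw [oi_14]
  simp only [y, map_add, map_sub, map_neg, map_mul, aeval_X, om_0, om_1, om_2, om_3, om_4, om_5, om_6, om_7, om_8, om_9, om_10, om_11, om_12, om_13, om_14, om_15, om_16, om_17, om_18, om_19, om_20]
  unfold Tcub y
  ring

lemma main_15 : aeval omegaP20 (omegaInvP20 15) = X 15 * Tcub := by
  rw [oi_15]
  simp only [y, map_add, map_sub, map_neg, map_mul, aeval_X, om_0, om_1, om_2, om_3, om_4, om_5, om_6, om_7, om_8, om_9, om_10, om_11, om_12, om_13, om_14, om_15, om_16, om_17, om_18, om_19, om_20]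
  unfold Tcub y
  ring

lemma main_16 : aeval omegaP20 (omegaInvP20 16) = X 16 * Tcub := by
  rw [oi_16]
  simp only [y, map_add, map_sub, map_neg, map_mul, aeval_X, om_0, om_1, om_2, om_3, om_4, om_5, om_6, om_7, om_8, om_9, om_10, om_11, om_12, om_13, om_14, om_15, om_16, om_17, om_18, om_19, om_20]
  unfold Tcub y
  ring

lemma main_17 : aeval omegaP20 (omegaInvP20 17) = X 17 * Tcub := by
  rw [oi_17]
  simp only [y, map_add, map_sub, map_neg, map_mul, aeval_X, om_0, om_1, om_2, om_3, om_4, om_5, om_6, om_7, om_8, om_9, om_10, om_11, om_12, om_13, om_14, om_15, om_16, om_17, om_18, om_19, om_20]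
  unfold Tcub y
  ring

lemma main_18 : aeval omegaP20 (omegaInvP20 18) = X 18 * Tcub := by
  rw [oi_18]
  simp only [y, map_add, map_sub, map_neg, map_mul, aeval_X, om_0, om_1, om_2, om_3, om_4, om_5, om_6, om_7, om_8, om_9, om_10, om_11, om_12, om_13, om_14, om_15, om_16, om_17, om_18, om_19, om_20]
  unfold Tcub y
  ring

lemma main_19 : aeval omegaP20 (omegaInvP20 19) = X 19 * Tcub := by
  rw [oi_19]
  simp only [y, map_add, map_sub, map_neg, map_mul, aeval_X, om_0, om_1, om_2, om_3, om_4, om_5, om_6, om_7, om_8, om_9, om_10, om_11, om_12, om_13, om_14, om_15, om_16, om_17, om_18, om_19, om_20]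
  unfold Tcub y
  ring

lemma main_20 : aeval omegaP20 (omegaInvP20 20) = X 20 * Tcub := by
  rw [oi_20]
  simp only [y, map_add, map_sub, map_neg, map_mul, aeval_X, om_0, om_1, om_2, om_3, om_4, om_5, om_6, om_7, om_8, om_9, om_10, om_11, om_12, om_13, om_14, om_15, om_16, om_17, om_18, om_19, om_20]
  unfold Tcub y
  ring

theorem cremonaP20_inverse :
    ∃ T : MvPolynomial (Fin 21) ℚ, T ≠ 0 ∧ T.IsHomogeneous 3 ∧
      ∀ i : Fin 21, aeval omegaP20 (omegaInvP20 i) = X i * T := by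
  refine ⟨Tcub, Tcub_ne, Tcub_hom, fun i => ?_⟩
  fin_cases i
  exacts [main_0, main_1, main_2, main_3, main_4, main_5, main_6, main_7, main_8, main_9, main_10, main_11, main_12, main_13, main_14, main_15, main_16, main_17, main_18, main_19, main_20]
end
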